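/- The Fermat equation X^n + Y^n = Z^n has no solution in pairwise coprime non-constant polynomials X, Y, Z over C for n >= 3. -/

import Mathlib

open Polynomial UniqueFactorizationMonoid UniqueFactorizationDomain

theorem fermat_polynomials (n : ℕ) (hn : 3 ≤ n)
    (X Y Z : ℂ[X]) (hX : 0 < X.natDegree) (hY : 0 < Y.natDegree) (hZ : 0 < Z.natDegree)
    (hXY : IsCoprime X Y) (hXZ : IsCoprime X Z) (hYZ : IsCoprime Y Z) :
    X^n + Y^n ≠ Z^n := by
  classical
  intro h
  have hn0 : 0 < n := by omega
  have hXne : X ≠ 0 := fun h0 => by simp [h0] at hX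
  have hYne : Y ≠ 0 := fun h0 => by simp [h0] at hY
  have hZne : Z ≠ 0 := fun h0 => by simp [h0] at hZ
  have ha : X ^ n ≠ 0 := pow_ne_zero _ hXne
  have hb : Y ^ n ≠ 0 := pow_ne_zero _ hYne
  have hc : -(Z ^ n) ≠ 0 := neg_ne_zero.mpr (pow_ne_zero _ hZne)
  have hsum : X ^ n + Y ^ n + -(Z ^ n) = 0 := by rw [h]; ring
  have hab : IsCoprime (X ^ n) (Y ^ n) := hXY.pow
  have hbc : IsCoprime (Y ^ n) (-(Z ^ n)) := (hYZ.pow).neg_right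
  have hca : IsCoprime (-(Z ^ n)) (X ^ n) := ((hXZ.symm).pow).neg_left
  rcases Polynomial.abc ha hb hc hab hsum with ⟨h1, h2, h3⟩ | ⟨d1, _, _⟩
  · have hrad : radical (X ^ n * Y ^ n * -(Z ^ n)) = radical (X * Y * Z) := by
      rw [mul_neg, radical_neg, ← mul_pow, ← mul_pow, radical_pow _ hn0.ne']
    rw [hrad] at h1 h2 h3
    have hXYZne : X * Y * Z ≠ 0 := mul_ne_zero (mul_ne_zero hXne hYne) hZne
    have hR : (radical (X * Y * Z)).natDegree ≤ (X * Y * Z).natDegree :=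
      natDegree_le_of_dvd radical_dvd_self hXYZne
    have hdeg : (X * Y * Z).natDegree = X.natDegree + Y.natDegree + Z.natDegree := by
      rw [natDegree_mul (mul_ne_zero hXne hYne) hZne, natDegree_mul hXne hYne]
    rw [natDegree_pow] at h1 h2
    rw [natDegree_neg, natDegree_pow] at h3
    rw [hdeg] at hR
    have hsum3 := Nat.add_le_add (Nat.add_le_add h1 h2) h3
    have h3n : 3 * (X.natDegree + Y.natDegree + Z.natDegree) ≤
        n * X.natDegree + n * Y.natDegree + n * Z.natDegree := by
      rw [← Nat.mul_add, ← Nat.mul_add]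
      exact Nat.mul_le_mul_right _ hn
    omega
  · have : (X ^ n).natDegree = 0 := natDegree_eq_zero_of_derivative_eq_zero d1
    rw [natDegree_pow] at this
    rcases Nat.mul_eq_zero.mp this with h0 | h0 <;> omega
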